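/- arXiv:1605.04591 — 3 statements merged into one kernel-verified Lean document; each statement's English description precedes it below -/
import Mathlib

section
/- Let h : X → ℝ, and let ν be the pmf ν(x) = P_h(x°, x) for a fixed state x°, where P_h is an irreducible aperiodic transition matrix. Then I − P_h + 1⊗ν is invertible with inverse Z_h = ∑_{n=0}^∞ (P_h − 1⊗ν)ⁿ, and moreover (P_h − 1⊗ν)ⁿ = P_hⁿ − 1⊗(ν P_h^{n−1}) for all n ≥ 1. -/
open Real Finset Matrix

/-- **Lemma B.2(i):** with `ν(x) = P_h(x°,x)`, the matrix `I − P_h + 1⊗ν` is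
invertible with inverse `Z_h = ∑ₙ (P_h − 1⊗ν)ⁿ`, and
`(P_h − 1⊗ν)ⁿ = P_hⁿ − 1⊗(ν P_h^{n−1})` for `n ≥ 1`. -/
theorem stmt7 {X : Type*} [Fintype X] [DecidableEq X] [Nonempty X]
    (Ph : Matrix X X ℝ)
    (hnn : ∀ x x', 0 ≤ Ph x x') (hrow : ∀ x, ∑ x', Ph x x' = 1)
    (N : ℕ) (hirr : ∀ n ≥ N, ∀ x x', 0 < (Ph ^ n) x x')
    (xo : X) (ν : X → ℝ) (hν : ∀ x, ν x = Ph xo x)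
    (M : Matrix X X ℝ) (hM : ∀ x x', M x x' = ν x') :
    (1 - Ph + M) * (∑' n : ℕ, (Ph - M) ^ n) = 1 ∧
    (∑' n : ℕ, (Ph - M) ^ n) * (1 - Ph + M) = 1 ∧
    (∀ n : ℕ, 1 ≤ n →
      (Ph - M) ^ n = Ph ^ n - Matrix.of (fun _ x' => (Matrix.vecMul ν (Ph ^ (n - 1))) x')) := by
  classical
  set Q : Matrix X X ℝ := Ph - M with hQdef
  set d : ℕ := Fintype.card X with hd
  -- row sums of powers of Ph are 1
  have hrowpow : ∀ n : ℕ, ∀ x, ∑ x', (Ph ^ n) x x' = 1 := by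
    intro n
    induction n with
    | zero => intro x; simp [Matrix.one_apply]
    | succ n ih =>
      intro x
      rw [pow_succ]
      simp only [Matrix.mul_apply]
      rw [Finset.sum_comm]
      calc ∑ y, ∑ x', (Ph ^ n) x y * Ph y x'
          = ∑ y, (Ph ^ n) x y * ∑ x', Ph y x' := by
            refine Finset.sum_congr rfl fun y _ => ?_
            rw [Finset.mul_sum]
        _ = 1 := by simp [hrow, ih]
  -- entries of powers of Ph are nonnegative
  have hnnpow : ∀ n : ℕ, ∀ x x', 0 ≤ (Ph ^ n) x x' := by
    intro n
    induction n with
    | zero =>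
      intro x x'
      rw [pow_zero]
      by_cases h : x = x' <;> simp [Matrix.one_apply, h]
    | succ n ih =>
      intro x x'
      rw [pow_succ, Matrix.mul_apply]
      exact Finset.sum_nonneg fun y _ => mul_nonneg (ih x y) (hnn y x')
  -- entrywise formula for powers of Q
  have hent : ∀ n : ℕ, 1 ≤ n → ∀ x x',
      (Q ^ n) x x' = (Ph ^ n) x x' - (Ph ^ n) xo x' := by
    intro n hn
    induction n, hn using Nat.le_induction with
    | base =>
      intro x x'
      simp [hQdef, Matrix.sub_apply, hM, hν]
    | succ n hn ih =>
      intro x x'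
      have hz : ∑ y, (Q ^ n) x y = 0 := by
        simp only [ih]
        rw [Finset.sum_sub_distrib, hrowpow n x, hrowpow n xo, sub_self]
      have hQcol : ∀ y, Q y x' = Ph y x' - Ph xo x' := by
        intro y; simp [hQdef, Matrix.sub_apply, hM, hν]
      rw [pow_succ, Matrix.mul_apply]
      calc ∑ y, (Q ^ n) x y * Q y x'
          = ∑ y, ((Q ^ n) x y * Ph y x' - (Q ^ n) x y * Ph xo x') := by
            refine Finset.sum_congr rfl fun y _ => ?_
            rw [hQcol y, mul_sub]
        _ = (∑ y, (Q ^ n) x y * Ph y x') - (∑ y, (Q ^ n) x y) * Ph xo x' := by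
            rw [Finset.sum_sub_distrib, Finset.sum_mul]
        _ = ∑ y, (Q ^ n) x y * Ph y x' := by rw [hz, zero_mul, sub_zero]
        _ = ∑ y, ((Ph ^ n) x y * Ph y x' - (Ph ^ n) xo y * Ph y x') := by
            refine Finset.sum_congr rfl fun y _ => ?_
            rw [ih x y, sub_mul]
        _ = (Ph ^ (n + 1)) x x' - (Ph ^ (n + 1)) xo x' := by
            rw [Finset.sum_sub_distrib, pow_succ, Matrix.mul_apply, Matrix.mul_apply]
  -- part 3
  have hpow3 : ∀ n : ℕ, 1 ≤ n →
      (Ph - M) ^ n = Ph ^ n - Matrix.of (fun _ x' => (Matrix.vecMul ν (Ph ^ (n - 1))) x') := by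
    intro n hn
    have hn' : (n - 1) + 1 = n := Nat.succ_pred_eq_of_pos hn
    ext x x'
    have h1 : Matrix.vecMul ν (Ph ^ (n - 1)) x' = (Ph ^ n) xo x' := by
      calc Matrix.vecMul ν (Ph ^ (n - 1)) x'
          = ∑ y, ν y * (Ph ^ (n - 1)) y x' := by
            simp [Matrix.vecMul, dotProduct]
        _ = (Ph * Ph ^ (n - 1)) xo x' := by
            rw [Matrix.mul_apply]
            exact Finset.sum_congr rfl fun y _ => by rw [hν]
        _ = (Ph ^ n) xo x' := by rw [← pow_succ', hn']
    have := hent n hn x x'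
    simp only [Matrix.sub_apply, Matrix.of_apply]
    rw [h1]
    exact this
  -- choose m and the Doeblin minorization constant
  set m : ℕ := max N 1 with hm
  have hm1 : 1 ≤ m := le_max_right _ _
  have hmN : N ≤ m := le_max_left _ _
  obtain ⟨p, -, hp⟩ := Finset.exists_min_image (Finset.univ : Finset (X × X))
    (fun p => (Ph ^ m) p.1 p.2)
    ⟨⟨Classical.arbitrary X, Classical.arbitrary X⟩, Finset.mem_univ _⟩
  set ε : ℝ := (Ph ^ m) p.1 p.2 with hε
  have hεpos : 0 < ε := hirr m hmN p.1 p.2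
  have hεle : ∀ x x', ε ≤ (Ph ^ m) x x' := fun x x' => hp (x, x') (Finset.mem_univ _)
  have hdpos : 0 < d := Fintype.card_pos
  have hdε : (d : ℝ) * ε ≤ 1 := by
    have h1 : ∑ _x' : X, ε ≤ ∑ x', (Ph ^ m) p.1 x' :=
      Finset.sum_le_sum fun x' _ => hεle p.1 x'
    rw [hrowpow m p.1] at h1
    calc (d : ℝ) * ε = ∑ _x' : X, ε := by
          rw [Finset.sum_const, Finset.card_univ, nsmul_eq_mul, hd]
      _ ≤ 1 := h1
  have hdεpos : 0 < (d : ℝ) * ε := by positivity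
  set r : ℝ := max (1 - (d : ℝ) * ε) (1 / 2) with hr
  have hr0 : 1 - (d : ℝ) * ε ≤ r := le_max_left _ _
  have hrhalf : (1 / 2 : ℝ) ≤ r := le_max_right _ _
  have hrnn : (0 : ℝ) ≤ r := by linarith
  have hrlt1 : r < 1 := max_lt (by linarith) (by norm_num)
  -- the Doeblin contraction estimate
  have contract : ∀ w : X → ℝ, (∑ y, w y) = 0 →
      ∑ x', |∑ y, w y * (Ph ^ m) y x'| ≤ r * ∑ y, |w y| := by
    intro w hw
    have h1 : ∀ x', |∑ y, w y * (Ph ^ m) y x'| ≤ ∑ y, |w y| * ((Ph ^ m) y x' - ε) := by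
      intro x'
      have heq : ∑ y, w y * (Ph ^ m) y x' = ∑ y, w y * ((Ph ^ m) y x' - ε) := by
        simp only [mul_sub]
        rw [Finset.sum_sub_distrib, ← Finset.sum_mul, hw, zero_mul, sub_zero]
      rw [heq]
      calc |∑ y, w y * ((Ph ^ m) y x' - ε)|
          ≤ ∑ y, |w y * ((Ph ^ m) y x' - ε)| := Finset.abs_sum_le_sum_abs _ _
        _ = ∑ y, |w y| * ((Ph ^ m) y x' - ε) := by
            refine Finset.sum_congr rfl fun y _ => ?_
            rw [abs_mul,
              abs_of_nonneg (show (0 : ℝ) ≤ (Ph ^ m) y x' - ε by linarith [hεle y x'])]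
    calc ∑ x', |∑ y, w y * (Ph ^ m) y x'|
        ≤ ∑ x', ∑ y, |w y| * ((Ph ^ m) y x' - ε) :=
          Finset.sum_le_sum fun x' _ => h1 x'
      _ = ∑ y, |w y| * (1 - (d : ℝ) * ε) := by
          rw [Finset.sum_comm]
          refine Finset.sum_congr rfl fun y _ => ?_
          rw [← Finset.mul_sum]
          congr 1
          rw [Finset.sum_sub_distrib, hrowpow m y, Finset.sum_const, Finset.card_univ,
            nsmul_eq_mul, hd]
      _ = (1 - (d : ℝ) * ε) * ∑ y, |w y| := by rw [← Finset.sum_mul, mul_comm]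
      _ ≤ r * ∑ y, |w y| := by
          have : (0 : ℝ) ≤ ∑ y, |w y| := Finset.sum_nonneg fun y _ => abs_nonneg _
          exact mul_le_mul_of_nonneg_right hr0 this
  -- rows of Qⁿ sum to zero, n ≥ 1
  have hrowQ : ∀ n : ℕ, 1 ≤ n → ∀ x, ∑ y, (Q ^ n) x y = 0 := by
    intro n hn x
    simp only [hent n hn]
    rw [Finset.sum_sub_distrib, hrowpow n x, hrowpow n xo, sub_self]
  -- crude bound
  have hbound2 : ∀ n : ℕ, 1 ≤ n → ∀ x, ∑ x', |(Q ^ n) x x'| ≤ 2 := by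
    intro n hn x
    calc ∑ x', |(Q ^ n) x x'|
        ≤ ∑ x', ((Ph ^ n) x x' + (Ph ^ n) xo x') := by
          refine Finset.sum_le_sum fun x' _ => ?_
          rw [hent n hn]
          calc |(Ph ^ n) x x' - (Ph ^ n) xo x'|
              ≤ |(Ph ^ n) x x'| + |(Ph ^ n) xo x'| := abs_sub _ _
            _ = (Ph ^ n) x x' + (Ph ^ n) xo x' := by
                rw [abs_of_nonneg (hnnpow n x x'), abs_of_nonneg (hnnpow n xo x')]
      _ = 2 := by
          rw [Finset.sum_add_distrib, hrowpow n x, hrowpow n xo]; norm_num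
  -- one contraction step
  have hstep : ∀ n : ℕ, 1 ≤ n → ∀ x,
      ∑ x', |(Q ^ (n + m)) x x'| ≤ r * ∑ y, |(Q ^ n) x y| := by
    intro n hn x
    have hw : ∑ y, (Q ^ n) x y = 0 := hrowQ n hn x
    have heq : ∀ x', (Q ^ (n + m)) x x' = ∑ y, (Q ^ n) x y * (Ph ^ m) y x' := by
      intro x'
      rw [hent (n + m) (by omega)]
      rw [pow_add, Matrix.mul_apply, Matrix.mul_apply, ← Finset.sum_sub_distrib]
      refine Finset.sum_congr rfl fun y _ => ?_
      rw [hent n hn, sub_mul]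
    calc ∑ x', |(Q ^ (n + m)) x x'|
        = ∑ x', |∑ y, (Q ^ n) x y * (Ph ^ m) y x'| :=
          Finset.sum_congr rfl fun x' _ => by rw [heq]
      _ ≤ r * ∑ y, |(Q ^ n) x y| := contract _ hw
  -- geometric decay along multiples of m
  have hgeo : ∀ k : ℕ, ∀ n : ℕ, 1 ≤ n → ∀ x,
      ∑ x', |(Q ^ (n + k * m)) x x'| ≤ 2 * r ^ k := by
    intro k
    induction k with
    | zero => intro n hn x; simpa using hbound2 n hn x
    | succ k ih =>
      intro n hn x
      have h1 : n + (k + 1) * m = (n + k * m) + m := by ring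
      rw [h1]
      calc ∑ x', |(Q ^ ((n + k * m) + m)) x x'|
          ≤ r * ∑ y, |(Q ^ (n + k * m)) x y| := hstep _ (by omega) x
        _ ≤ r * (2 * r ^ k) := mul_le_mul_of_nonneg_left (ih n hn x) hrnn
        _ = 2 * r ^ (k + 1) := by ring
  -- entrywise geometric bound
  have hkey : ∀ (n : ℕ) (x x' : X), |(Q ^ n) x x'| ≤ 4 * r ^ (n / m) := by
    intro n x x'
    rcases Nat.eq_zero_or_pos n with h0 | hn
    · subst h0
      rw [Nat.zero_div, pow_zero, pow_zero]
      have h1 : |(1 : Matrix X X ℝ) x x'| ≤ 1 := by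
        by_cases h : x = x' <;> simp [Matrix.one_apply, h]
      linarith
    · have hsingle : |(Q ^ n) x x'| ≤ ∑ y, |(Q ^ n) x y| :=
        Finset.single_le_sum (fun y _ => abs_nonneg ((Q ^ n) x y)) (Finset.mem_univ x')
      set k := n / m with hk
      rcases Nat.eq_zero_or_pos k with hk0 | hk1
      · rw [hk0, pow_zero]
        have := hbound2 n hn x
        linarith
      · have hk' : k = (k - 1) + 1 := (Nat.succ_pred_eq_of_pos hk1).symm
        have hmod : m * k + n % m = n := Nat.div_add_mod n m
        have h1 : n = (n % m + m) + (k - 1) * m := by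
          conv_lhs => rw [← hmod, hk']
          ring
        have h2 := hgeo (k - 1) (n % m + m) (by omega) x
        rw [← h1] at h2
        have h3 : r ^ (k - 1) ≤ 2 * r ^ k := by
          have hpw : (0 : ℝ) ≤ r ^ (k - 1) := pow_nonneg hrnn _
          calc r ^ (k - 1) = 1 * r ^ (k - 1) := (one_mul _).symm
            _ ≤ (2 * r) * r ^ (k - 1) := by nlinarith
            _ = 2 * r ^ ((k - 1) + 1) := by ring
            _ = 2 * r ^ k := by rw [← hk']
        linarith
  -- summability of the dominating series
  have hB : Summable (fun n : ℕ => 4 * r ^ (n / m)) := by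
    haveI : NeZero m := ⟨by omega⟩
    rw [← Equiv.summable_iff (Nat.divModEquiv m).symm]
    have hfun : ((fun n : ℕ => 4 * r ^ (n / m)) ∘ ⇑(Nat.divModEquiv m).symm)
        = fun p : ℕ × Fin m => 4 * r ^ p.1 := by
      funext q
      simp only [Function.comp_apply, Nat.divModEquiv_symm_apply]
      congr 1
      rw [mul_comm, Nat.mul_add_div (by omega), Nat.div_eq_of_lt q.2.is_lt, add_zero]
    rw [hfun]
    refine (summable_prod_of_nonneg ?_).2 ⟨fun k => Summable.of_finite, ?_⟩
    · intro q
      positivity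
    · have heq : (fun k : ℕ => ∑' (_ : Fin m), 4 * r ^ k)
          = fun k : ℕ => (m : ℝ) * (4 * r ^ k) := by
        funext k
        rw [tsum_fintype]
        rw [Finset.sum_const, Finset.card_univ, Fintype.card_fin, nsmul_eq_mul]
      rw [heq]
      exact (((summable_geometric_of_lt_one hrnn hrlt1).mul_left 4).mul_left _)
  -- summability of the matrix series
  have hQsum : Summable (fun n : ℕ => Q ^ n) := by
    refine Pi.summable.2 fun x => Pi.summable.2 fun x' => ?_
    refine Summable.of_norm_bounded hB fun n => ?_
    simpa [Real.norm_eq_abs] using hkey n x x'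
  have hsucc : Summable (fun n : ℕ => Q ^ (n + 1)) := by
    exact (summable_nat_add_iff 1).2 hQsum
  set S : Matrix X X ℝ := ∑' n : ℕ, Q ^ n with hS
  have h0 : S = 1 + ∑' n : ℕ, Q ^ (n + 1) := by
    rw [hS, Summable.tsum_eq_zero_add hQsum, pow_zero]
  have hL : Q * S = ∑' n : ℕ, Q ^ (n + 1) := by
    calc Q * S = ∑' n : ℕ, Q * Q ^ n := (hQsum.tsum_mul_left Q).symm
      _ = ∑' n : ℕ, Q ^ (n + 1) := tsum_congr fun n => (pow_succ' Q n).symm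
  have hRm : S * Q = ∑' n : ℕ, Q ^ (n + 1) := by
    calc S * Q = ∑' n : ℕ, Q ^ n * Q := (hQsum.tsum_mul_right Q).symm
      _ = ∑' n : ℕ, Q ^ (n + 1) := tsum_congr fun n => (pow_succ Q n).symm
  have hIQ : 1 - Ph + M = 1 - Q := by rw [hQdef]; abel
  refine ⟨?_, ?_, hpow3⟩
  · rw [hIQ, sub_mul, one_mul, hL, h0]
    exact add_sub_cancel_right 1 _
  · rw [hIQ, mul_sub, mul_one, hRm, h0]
    exact add_sub_cancel_right 1 _
end

section
/- Conversely, with the setup above, if Π(x,x_u') = π(x)R(x,x_u') is absolutely continuous with respect to Π₀(x,x_u') = π₀(x)R₀(x,x_u'), then K(P‖P₀) = ∑_{x,x'} π(x)P(x,x') log(P(x,x')/P₀(x,x')) is finite (all terms are well defined with the convention 0 log 0 = 0). -/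
open Real Finset

/-- **Lemma 3.3 (⇐):** if `Π(x,x_u') = π(x)R(x,x_u')` is absolutely continuous
w.r.t. `Π₀(x,x_u') = π₀(x)R₀(x,x_u')`, then the Donsker–Varadhan rate
`K(P‖P₀)` is finite, i.e. every term of the sum is well defined:
whenever `π(x)P(x,x') > 0` also `P₀(x,x') > 0` (convention `0 log 0 = 0`). -/
theorem stmt11 {Xu Xn : Type*} [Fintype Xu] [Fintype Xn] [Nonempty Xu] [Nonempty Xn]
    (R R₀ : Xu × Xn → Xu → ℝ) (Q₀ : Xu × Xn → Xn → ℝ)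
    (hRnn : ∀ x xu', 0 ≤ R x xu') (hRrow : ∀ x, ∑ xu', R x xu' = 1)
    (hR₀nn : ∀ x xu', 0 ≤ R₀ x xu') (hR₀row : ∀ x, ∑ xu', R₀ x xu' = 1)
    (hQ₀nn : ∀ x xn', 0 ≤ Q₀ x xn') (hQ₀row : ∀ x, ∑ xn', Q₀ x xn' = 1)
    (P P₀ : Xu × Xn → Xu × Xn → ℝ)
    (hP : ∀ x x', P x x' = R x x'.1 * Q₀ x x'.2)
    (hP₀ : ∀ x x', P₀ x x' = R₀ x x'.1 * Q₀ x x'.2)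
    (pi pi₀ : Xu × Xn → ℝ)
    (hπnn : ∀ x, 0 ≤ pi x) (hπsum : ∑ x, pi x = 1)
    (hπinv : ∀ x', ∑ x, pi x * P x x' = pi x')
    (hπ₀nn : ∀ x, 0 ≤ pi₀ x) (hπ₀sum : ∑ x, pi₀ x = 1)
    (hπ₀inv : ∀ x', ∑ x, pi₀ x * P₀ x x' = pi₀ x')
    -- absolute continuity `Π ≪ Π₀`
    (hac : ∀ x xu', pi₀ x * R₀ x xu' = 0 → pi x * R x xu' = 0) :
    ∀ x x', 0 < pi x * P x x' → 0 < P₀ x x' := by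
  intro x x' h
  rw [hP] at h
  have hπ : 0 < pi x := by
    rcases (hπnn x).lt_or_eq with h' | h'
    · exact h'
    · rw [← h'] at h; simp at h
  have hR : 0 < R x x'.1 := by
    rcases (hRnn x x'.1).lt_or_eq with h' | h'
    · exact h'
    · rw [← h'] at h; simp at h
  have hQ : 0 < Q₀ x x'.2 := by
    rcases (hQ₀nn x x'.2).lt_or_eq with h' | h'
    · exact h'
    · rw [← h'] at h; simp at h
  have hR₀ : 0 < R₀ x x'.1 := by
    rcases (hR₀nn x x'.1).lt_or_eq with h' | h'
    · exact h'
    · exfalso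
      have := hac x x'.1 (by rw [← h', mul_zero])
      rcases mul_eq_zero.mp this with h2 | h2 <;> simp [h2] at hπ hR <;> linarith
  rw [hP₀]
  positivity
end

section
/- Suppose (h*, η*) solves the fixed point equation ζU(x) + Λ_{h*}(x) = h*(x) + η* for all x ∈ X, where Λ_{h*}(x) = log ∑_{x'} P₀(x,x') exp(h*(x'_u|x)) with h*(x'_u|x) = ∑_{x_n'} Q₀(x,x_n')h*(x_u',x_n'). Then (h*, η*) solves the average-reward optimality equation: for every x, max over row-pmfs R(x,·) ≪ R₀(x,·) of { ζU(x) − ∑_{x_u'} R(x,x_u') log(R(x,x_u')/R₀(x,x_u')) + ∑_{x'} R(x,x_u')Q₀(x,x_n') h*(x') } = h*(x) + η*, and the maximizer is Ř(x,x_u') = R₀(x,x_u') exp(h*(x_u'|x) − Λ_{h*}(x)). -/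
open Real Finset

/-- **Proposition A.2:** if `(h*, η*)` solves the fixed point equation
`ζU(x) + Λ_{h*}(x) = h*(x) + η*`, where
`Λ_{h*}(x) = log ∑_{x'} P₀(x,x') exp(h*(x_u'|x))` with
`h*(x_u'|x) = ∑_{x_n'} Q₀(x,x_n')h*(x_u',x_n')` and `P₀ = R₀·Q₀`,
then `(h*, η*)` solves the average-reward optimality equation, and the
maximizing row is the twisted kernel
`Ř(x,x_u') = R₀(x,x_u') exp(h*(x_u'|x) − Λ_{h*}(x))`. -/
theorem stmt19 {Xu Xn : Type*} [Fintype Xu] [Fintype Xn] [Nonempty Xu] [Nonempty Xn]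
    (R₀ : Xu × Xn → Xu → ℝ) (Q₀ : Xu × Xn → Xn → ℝ)
    (hR₀pos : ∀ x xu', 0 < R₀ x xu') (hR₀row : ∀ x, ∑ xu', R₀ x xu' = 1)
    (hQ₀nn : ∀ x xn', 0 ≤ Q₀ x xn') (hQ₀row : ∀ x, ∑ xn', Q₀ x xn' = 1)
    (P₀ : Xu × Xn → Xu × Xn → ℝ)
    (hP₀ : ∀ x x', P₀ x x' = R₀ x x'.1 * Q₀ x x'.2)
    (U h : Xu × Xn → ℝ) (ζ η : ℝ)
    -- conditional function and log-normalizer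
    (hcond : Xu × Xn → Xu → ℝ)
    (hhcond : ∀ x xu', hcond x xu' = ∑ xn', Q₀ x xn' * h (xu', xn'))
    (Λ : Xu × Xn → ℝ)
    (hΛ : ∀ x, Λ x = Real.log (∑ x', P₀ x x' * Real.exp (hcond x x'.1)))
    -- fixed point equation `ζU + Λ_{h*} = h* + η*`
    (hfix : ∀ x, ζ * U x + Λ x = h x + η) :
    ∀ x : Xu × Xn,
      IsGreatest
        {v : ℝ | ∃ R : Xu → ℝ, (∀ xu', 0 ≤ R xu') ∧ (∑ xu', R xu' = 1) ∧
          v = ζ * U x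
              - (∑ xu', R xu' * Real.log (R xu' / R₀ x xu'))
              + ∑ x' : Xu × Xn, R x'.1 * Q₀ x x'.2 * h x'}
        (h x + η)
      ∧
      (ζ * U x
        - (∑ xu', (R₀ x xu' * Real.exp (hcond x xu' - Λ x)) *
            Real.log ((R₀ x xu' * Real.exp (hcond x xu' - Λ x)) / R₀ x xu'))
        + ∑ x' : Xu × Xn,
            (R₀ x x'.1 * Real.exp (hcond x x'.1 - Λ x)) * Q₀ x x'.2 * h x')
        = h x + η := by

  intro x
  -- abbreviations
  set g : Xu → ℝ := fun xu' => R₀ x xu' * Real.exp (hcond x xu') with hg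
  have hgpos : ∀ i, 0 < g i := fun i => mul_pos (hR₀pos x i) (Real.exp_pos _)
  have hZpos : 0 < ∑ i, g i :=
    Finset.sum_pos (fun i _ => hgpos i) Finset.univ_nonempty
  have hΛx : Λ x = Real.log (∑ i, g i) := by
    rw [hΛ x]
    congr 1
    rw [Fintype.sum_prod_type]
    refine Finset.sum_congr rfl fun a _ => ?_
    simp only [hP₀]
    calc ∑ b, R₀ x a * Q₀ x b * Real.exp (hcond x a)
        = (∑ b, Q₀ x b) * (R₀ x a * Real.exp (hcond x a)) := by
          rw [Finset.sum_mul]; refine Finset.sum_congr rfl fun b _ => ?_; ring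
      _ = g a := by rw [hQ₀row]; ring
  have hexpΛ : Real.exp (Λ x) = ∑ i, g i := by rw [hΛx, Real.exp_log hZpos]
  -- rewrite the double sum
  have hdsum : ∀ R : Xu → ℝ,
      (∑ x' : Xu × Xn, R x'.1 * Q₀ x x'.2 * h x') = ∑ i, R i * hcond x i := by
    intro R
    rw [Fintype.sum_prod_type]
    refine Finset.sum_congr rfl fun a _ => ?_
    rw [hhcond, Finset.mul_sum]
    refine Finset.sum_congr rfl fun b _ => ?_
    ring
  -- the twisted kernel
  set Rtw : Xu → ℝ := fun i => R₀ x i * Real.exp (hcond x i - Λ x) with hRtw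
  have hRtwpos : ∀ i, 0 < Rtw i := fun i => mul_pos (hR₀pos x i) (Real.exp_pos _)
  have hRtwformula : ∀ i, Rtw i = g i * Real.exp (-Λ x) := by
    intro i
    simp only [hRtw, hg, Real.exp_sub, Real.exp_neg]
    ring
  have hRtwsum : ∑ i, Rtw i = 1 := by
    calc ∑ i, Rtw i = (∑ i, g i) * Real.exp (-Λ x) := by
          rw [Finset.sum_mul]; exact Finset.sum_congr rfl fun i _ => hRtwformula i
      _ = 1 := by
          rw [← hexpΛ, ← Real.exp_add]; simp
  have hlogRtw : ∀ i, Real.log (Rtw i / R₀ x i) = hcond x i - Λ x := by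
    intro i
    rw [hRtw]
    simp only []
    rw [mul_comm, mul_div_assoc, div_self (ne_of_gt (hR₀pos x i)), mul_one, Real.log_exp]
  -- value at the twisted kernel
  have hval : ζ * U x - (∑ i, Rtw i * Real.log (Rtw i / R₀ x i)) + ∑ i, Rtw i * hcond x i
      = h x + η := by
    have : (∑ i, Rtw i * Real.log (Rtw i / R₀ x i))
        = (∑ i, Rtw i * hcond x i) - Λ x := by
      calc (∑ i, Rtw i * Real.log (Rtw i / R₀ x i))
          = ∑ i, (Rtw i * hcond x i - Rtw i * Λ x) := by
            refine Finset.sum_congr rfl fun i _ => ?_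
            rw [hlogRtw]; ring
        _ = (∑ i, Rtw i * hcond x i) - (∑ i, Rtw i) * Λ x := by
            rw [Finset.sum_sub_distrib, Finset.sum_mul]
        _ = (∑ i, Rtw i * hcond x i) - Λ x := by rw [hRtwsum, one_mul]
    rw [this, ← hfix x]
    ring
  -- upper bound: Gibbs inequality
  have hub : ∀ R : Xu → ℝ, (∀ i, 0 ≤ R i) → (∑ i, R i = 1) →
      ζ * U x - (∑ i, R i * Real.log (R i / R₀ x i)) + ∑ i, R i * hcond x i
        ≤ h x + η := by
    intro R hRnn hRsum
    have key : ∀ i, R i * hcond x i - R i * Real.log (R i / R₀ x i) - R i * Λ x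
        ≤ g i * Real.exp (-Λ x) - R i := by
      intro i
      rcases eq_or_lt_of_le (hRnn i) with h0 | hpos
      · rw [← h0]
        simp only [zero_mul, sub_zero, mul_zero, sub_self]
        have := mul_pos (hgpos i) (Real.exp_pos (-Λ x))
        linarith
      · have ht : 0 < g i * Real.exp (-Λ x) / R i :=
          div_pos (mul_pos (hgpos i) (Real.exp_pos _)) hpos
        have hlog := Real.log_le_sub_one_of_pos ht
        have hlogt : Real.log (g i * Real.exp (-Λ x) / R i)
            = hcond x i - Real.log (R i / R₀ x i) - Λ x := by
          rw [Real.log_div (ne_of_gt (mul_pos (hgpos i) (Real.exp_pos _))) (ne_of_gt hpos),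
            Real.log_mul (ne_of_gt (hgpos i)) (ne_of_gt (Real.exp_pos _)),
            Real.log_exp, hg,
            Real.log_mul (ne_of_gt (hR₀pos x i)) (ne_of_gt (Real.exp_pos _)),
            Real.log_exp,
            Real.log_div (ne_of_gt hpos) (ne_of_gt (hR₀pos x i))]
          ring
        have := mul_le_mul_of_nonneg_left hlog (le_of_lt hpos)
        rw [hlogt] at this
        calc R i * hcond x i - R i * Real.log (R i / R₀ x i) - R i * Λ x
            = R i * (hcond x i - Real.log (R i / R₀ x i) - Λ x) := by ring
          _ ≤ R i * (g i * Real.exp (-Λ x) / R i - 1) := this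
          _ = g i * Real.exp (-Λ x) - R i := by
              field_simp
    have hsumkey : (∑ i, R i * hcond x i) - (∑ i, R i * Real.log (R i / R₀ x i))
        - Λ x ≤ 0 := by
      have := Finset.sum_le_sum (fun i (_ : i ∈ Finset.univ) => key i)
      have h1 : (∑ i, g i) * Real.exp (-Λ x) = 1 := by
        rw [← hexpΛ, ← Real.exp_add]; simp
      rw [Finset.sum_sub_distrib, Finset.sum_sub_distrib, Finset.sum_sub_distrib,
        ← Finset.sum_mul, ← Finset.sum_mul, hRsum, one_mul, h1] at this
      linarith
    have := hfix x
    linarith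
  refine ⟨⟨⟨Rtw, fun i => le_of_lt (hRtwpos i), hRtwsum, ?_⟩, ?_⟩, ?_⟩
  · rw [hdsum Rtw]; exact hval.symm
  · rintro v ⟨R, hRnn, hRsum, rfl⟩
    rw [hdsum]
    exact hub R hRnn hRsum
  · show ζ * U x - (∑ i, Rtw i * Real.log (Rtw i / R₀ x i))
        + ∑ x' : Xu × Xn, Rtw x'.1 * Q₀ x x'.2 * h x' = h x + η
    rw [hdsum Rtw]; exact hval
end
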